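/- The Laurent polynomial Δ(t) = t² − t + 1 − t⁻¹ + t⁻² cannot be written in the form c·f(t)·f(t⁻¹) for any nonzero rational constant c and Laurent polynomial f ∈ ℚ[t,t⁻¹]. -/

import Mathlib

open LaurentPolynomial

noncomputable def evAt (u : ℚˣ) : LaurentPolynomial ℚ →ₐ[ℚ] ℚ :=
  AddMonoidAlgebra.lift ℚ ℚ ℤ ((Units.coeHom ℚ).comp (zpowersHom ℚˣ u))

lemma evAt_T (u : ℚˣ) (n : ℤ) : evAt u (T n) = (u : ℚ) ^ n := by
  show AddMonoidAlgebra.lift ℚ ℚ ℤ _ (AddMonoidAlgebra.single n (1 : ℚ)) = _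
  rw [AddMonoidAlgebra.lift_single]
  simp [zpowersHom, Units.val_zpow_eq_zpow_val]

lemma evAt_C (u : ℚˣ) (a : ℚ) : evAt u (C a) = a := by
  rw [C_eq_algebraMap, AlgHom.commutes, Algebra.algebraMap_self_apply]

lemma evAt_invert (u : ℚˣ) (f : LaurentPolynomial ℚ) :
    evAt u (invert f) = evAt u⁻¹ f := by
  induction f using LaurentPolynomial.induction_on' with
  | add p q hp hq => simp [hp, hq]
  | C_mul_T n a =>
    simp [evAt_T, evAt_C, zpow_neg]

lemma sq_ne_five (q : ℚ) : q ^ 2 ≠ 5 := by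
  intro h
  have h5 : Irrational (Real.sqrt 5) := by
    simpa using Nat.Prime.irrational_sqrt (by norm_num : Nat.Prime 5)
  apply h5
  refine ⟨|q|, ?_⟩
  have : ((q : ℝ)) ^ 2 = 5 := by exact_mod_cast congrArg (Rat.cast : ℚ → ℝ) h
  rw [Rat.cast_abs, ← Real.sqrt_sq_eq_abs, this]

/-- The Laurent polynomial `Δ(t) = t² − t + 1 − t⁻¹ + t⁻²` (the Alexander polynomial of
`Σ₂ ⋊_{ℤ₁₀} S¹`) cannot be written in the form `c·f(t)·f(t⁻¹)` for any nonzero rational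
constant `c` and Laurent polynomial `f ∈ ℚ[t,t⁻¹]`. -/
theorem not_exists_symmetric_factorization_deg2 :
    ¬ ∃ (c : ℚ) (f : LaurentPolynomial ℚ), c ≠ 0 ∧
      (T 2 - T 1 + 1 - T (-1) + T (-2) : LaurentPolynomial ℚ) = c • (f * invert f) := by
  rintro ⟨c, f, -, hf⟩
  have h1 := congrArg (evAt 1) hf
  have hm := congrArg (evAt (-1)) hf
  rw [map_smul, map_mul, evAt_invert] at h1 hm
  simp only [map_add, map_sub, map_one, evAt_T, inv_one, inv_neg, smul_eq_mul] at h1 hm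
  norm_num at h1 hm
  -- h1 : 1 = c * (evAt 1 f)^2 ; hm : 5 = c * (evAt (-1) f)^2 (shapes may differ)
  set a := evAt (-1) f with ha
  set b := evAt 1 f with hb
  have key : (a / b) ^ 2 = 5 := by
    have hb0 : b ≠ 0 := by
      intro h0; rw [h0] at h1; simp at h1
    field_simp
    nlinarith [h1, hm]
  exact sq_ne_five _ key
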